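/- Let F and Θ_j for every j ∈ J be strictly convex, where J ≠ ∅, and let S be convex. Suppose that for any x, y ∈ S with x ≠ y there exists j ∈ J such that L(x,y) ∩ Θ_j = ∅, and that for every x ∈ S the projection Π_F(x; Θ_j) is nonempty for all j ∈ J. Then the function T₂(x) := Σ_{j∈J} T_F(x; Θ_j) is strictly convex on S. -/

import Mathlib

open Set Pointwise Filter Topology Bornology Function

variable {X : Type*} [NormedAddCommGroup X] [NormedSpace ℝ X]

/-- The Minkowski gauge of `F`: `ρ_F(x) = inf {t ≥ 0 : x ∈ t • F}`. -/
noncomputable def rhoF (F : Set X) (x : X) : ℝ :=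
  sInf {t : ℝ | 0 ≤ t ∧ x ∈ t • F}

/-- The maximal time function `C_F(x; Q) = sup {ρ_F(q - x) : q ∈ Q}`. -/
noncomputable def maxTime (F Q : Set X) (x : X) : ℝ :=
  sSup ((fun q => rhoF F (q - x)) '' Q)

/-- The minimal time function `T_F(x; Θ) = inf {ρ_F(q - x) : q ∈ Θ}`. -/
noncomputable def minTime (F Θ : Set X) (x : X) : ℝ :=
  sInf ((fun q => rhoF F (q - x)) '' Θ)

/-- The projection `Π_F(x; Θ) = {u ∈ Θ : ρ_F(u - x) = T_F(x; Θ)}`. -/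
def nearProj (F Θ : Set X) (x : X) : Set X :=
  {u ∈ Θ | rhoF F (u - x) = minTime F Θ x}

/-- The line through `x` and `y`: `L(x,y) = {t•x + (1-t)•y : t ∈ ℝ}`. -/
def lineThrough (x y : X) : Set X :=
  {z : X | ∃ t : ℝ, z = t • x + (1 - t) • y}

lemma rhoF_eq_gauge (F : Set X) (hF : F.Nonempty) : rhoF F = gauge F := by
  funext x
  rcases eq_or_ne x 0 with rfl | hx
  · rw [gauge_zero]
    refine le_antisymm ?_ ?_
    · exact csInf_le ⟨0, fun t ht => ht.1⟩ ⟨le_refl 0, by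
        simpa [zero_smul_set hF] using (rfl : (0:X) = 0)⟩
    · exact le_csInf ⟨0, le_refl 0, by simpa [zero_smul_set hF]⟩ fun t ht => ht.1
  · unfold rhoF gauge
    congr 1
    ext t
    simp only [Set.mem_setOf_eq, Set.mem_sep_iff, Set.mem_Ioi]
    constructor
    · rintro ⟨ht, hxt⟩
      rcases ht.lt_or_eq with h | rfl
      · exact ⟨h, hxt⟩
      · rw [zero_smul_set hF] at hxt
        exact absurd hxt hx
    · rintro ⟨ht, hxt⟩
      exact ⟨ht.le, hxt⟩

lemma gauge_strict_add {F : Set X} (hFc : IsClosed F) (hFb : IsBounded F)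
    (hFconv : Convex ℝ F) (hF0 : (0 : X) ∈ interior F) (hFs : StrictConvex ℝ F)
    {a b : X} (ha : a ≠ 0) (hb : b ≠ 0) (hpar : ¬ ∃ c : ℝ, 0 < c ∧ a = c • b) :
    gauge F (a + b) < gauge F a + gauge F b := by
  have hnhds : F ∈ 𝓝 (0 : X) := mem_interior_iff_mem_nhds.mp hF0
  have habs : Absorbent ℝ F := absorbent_nhds_zero hnhds
  have hvb : Bornology.IsVonNBounded ℝ F := (NormedSpace.isVonNBounded_iff ℝ).mpr hFb
  set α := gauge F a with hα
  set β := gauge F b with hβ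
  have hαpos : 0 < α := (gauge_pos habs hvb).mpr ha
  have hβpos : 0 < β := (gauge_pos habs hvb).mpr hb
  set p := α⁻¹ • a with hp
  set q := β⁻¹ • b with hq
  have hgp : gauge F p = 1 := by
    rw [hp, gauge_smul_of_nonneg (inv_nonneg.mpr hαpos.le), smul_eq_mul, ← hα,
      inv_mul_cancel₀ hαpos.ne']
  have hgq : gauge F q = 1 := by
    rw [hq, gauge_smul_of_nonneg (inv_nonneg.mpr hβpos.le), smul_eq_mul, ← hβ,
      inv_mul_cancel₀ hβpos.ne']
  have hpF : p ∈ F := by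
    have := (gauge_le_one_iff_mem_closure hFconv hnhds).mp hgp.le
    rwa [hFc.closure_eq] at this
  have hqF : q ∈ F := by
    have := (gauge_le_one_iff_mem_closure hFconv hnhds).mp hgq.le
    rwa [hFc.closure_eq] at this
  have hpq : p ≠ q := by
    intro h
    apply hpar
    refine ⟨α * β⁻¹, by positivity, ?_⟩
    have : a = α • p := by rw [hp, smul_inv_smul₀ hαpos.ne']
    rw [this, h, hq, smul_smul]
  have hsum : (0:ℝ) < α + β := by positivity
  have hmem : (α / (α + β)) • p + (β / (α + β)) • q ∈ interior F :=
    hFs hpF hqF hpq (by positivity) (by positivity) (by field_simp)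
  have heq : (α / (α + β)) • p + (β / (α + β)) • q = (α + β)⁻¹ • (a + b) := by
    rw [hp, hq, smul_smul, smul_smul, smul_add]
    congr 2 <;> field_simp
  rw [heq] at hmem
  have hlt : gauge F ((α + β)⁻¹ • (a + b)) < 1 :=
    (gauge_lt_one_iff_mem_interior hFconv hnhds).mpr hmem
  rw [gauge_smul_of_nonneg (inv_nonneg.mpr hsum.le), smul_eq_mul] at hlt
  calc gauge F (a + b) = (α + β) * ((α + β)⁻¹ * gauge F (a + b)) := by
        field_simp
    _ < (α + β) * 1 := by exact mul_lt_mul_of_pos_left hlt hsum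
    _ = α + β := mul_one _

lemma minTime_le_gauge {F : Set X} (hF : F.Nonempty) {Θ : Set X} {w : X} (hw : w ∈ Θ)
    (x : X) : minTime F Θ x ≤ gauge F (w - x) := by
  have : rhoF F = gauge F := rhoF_eq_gauge F hF
  refine csInf_le ⟨0, ?_⟩ ⟨w, hw, by rw [this]⟩
  rintro r ⟨q, hq, rfl⟩
  rw [this]
  exact gauge_nonneg _

/-- Proposition 3.12. -/
theorem stmt17 {κ : Type*} (F : Set X) (J : Finset κ) (Θ : κ → Set X) (S : Set X)
    (hFc : IsClosed F) (hFb : IsBounded F) (hFconv : Convex ℝ F)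
    (hF0 : (0 : X) ∈ interior F) (hFs : StrictConvex ℝ F)
    (hΘne : ∀ j ∈ J, (Θ j).Nonempty) (hΘc : ∀ j ∈ J, IsClosed (Θ j))
    (hΘs : ∀ j ∈ J, StrictConvex ℝ (Θ j))
    (hSne : S.Nonempty) (hSc : IsClosed S) (hSconv : Convex ℝ S)
    (hJ : J.Nonempty)
    (hline : ∀ x ∈ S, ∀ y ∈ S, x ≠ y → ∃ j ∈ J, lineThrough x y ∩ Θ j = ∅)
    (hPi : ∀ x ∈ S, ∀ j ∈ J, (nearProj F (Θ j) x).Nonempty) :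
    StrictConvexOn ℝ S (fun x => ∑ j ∈ J, minTime F (Θ j) x) := by
  have hFne : F.Nonempty := ⟨0, interior_subset hF0⟩
  have hrho : rhoF F = gauge F := rhoF_eq_gauge F hFne
  have hnhds : F ∈ 𝓝 (0 : X) := mem_interior_iff_mem_nhds.mp hF0
  have habs : Absorbent ℝ F := absorbent_nhds_zero hnhds
  have hvb : Bornology.IsVonNBounded ℝ F := (NormedSpace.isVonNBounded_iff ℝ).mpr hFb
  constructor
  · exact hSconv
  intro x hx y hy hxy t s ht hs hts
  simp only [smul_eq_mul]
  set z := t • x + s • y with hz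
  -- the key pointwise bound, with strictness information
  have key : ∀ j ∈ J, minTime F (Θ j) z ≤ t * minTime F (Θ j) x + s * minTime F (Θ j) y := by
    intro j hj
    obtain ⟨u, huΘ, hu⟩ := hPi x hx j hj
    obtain ⟨v, hvΘ, hv⟩ := hPi y hy j hj
    have hw : t • u + s • v ∈ Θ j := (hΘs j hj).convex huΘ hvΘ ht.le hs.le hts
    have hwz : t • u + s • v - z = t • (u - x) + s • (v - y) := by
      rw [hz, smul_sub, smul_sub]; abel
    calc minTime F (Θ j) z ≤ gauge F (t • u + s • v - z) := minTime_le_gauge hFne hw z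
      _ = gauge F (t • (u - x) + s • (v - y)) := by rw [hwz]
      _ ≤ gauge F (t • (u - x)) + gauge F (s • (v - y)) := gauge_add_le hFconv habs _ _
      _ = t * gauge F (u - x) + s * gauge F (v - y) := by
          rw [gauge_smul_of_nonneg ht.le, gauge_smul_of_nonneg hs.le, smul_eq_mul, smul_eq_mul]
      _ = t * minTime F (Θ j) x + s * minTime F (Θ j) y := by
          rw [← hu, ← hv, hrho]
  -- strictness at the special index
  obtain ⟨j₀, hj₀, hline₀⟩ := hline x hx y hy hxy
  have hzΘ : z ∉ Θ j₀ := by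
    intro h
    have : z ∈ lineThrough x y ∩ Θ j₀ := ⟨⟨t, by rw [hz]; congr 1; rw [← hts]; ring_nf⟩, h⟩
    rw [hline₀] at this; exact this
  have keyStrict : minTime F (Θ j₀) z < t * minTime F (Θ j₀) x + s * minTime F (Θ j₀) y := by
    obtain ⟨u, huΘ, hu⟩ := hPi x hx j₀ hj₀
    obtain ⟨v, hvΘ, hv⟩ := hPi y hy j₀ hj₀
    set a := u - x with ha
    set b := v - y with hb
    have hane : a ≠ 0 := by
      intro h
      have hux : u = x := by rwa [ha, sub_eq_zero] at h
      have : x ∈ lineThrough x y ∩ Θ j₀ :=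
        ⟨⟨1, by simp⟩, hux ▸ huΘ⟩
      rw [hline₀] at this; exact this
    have hbne : b ≠ 0 := by
      intro h
      have hvy : v = y := by rwa [hb, sub_eq_zero] at h
      have : y ∈ lineThrough x y ∩ Θ j₀ :=
        ⟨⟨0, by simp⟩, hvy ▸ hvΘ⟩
      rw [hline₀] at this; exact this
    have hwz : t • u + s • v - z = t • a + s • b := by
      rw [hz, ha, hb, smul_sub, smul_sub]; abel
    have hRHS : t * gauge F a + s * gauge F b
        = t * minTime F (Θ j₀) x + s * minTime F (Θ j₀) y := by
      rw [← hu, ← hv, hrho]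
    by_cases hpar : ∃ c : ℝ, 0 < c ∧ a = c • b
    · -- parallel case
      obtain ⟨c, hc, hab⟩ := hpar
      by_cases huv : u = v
      · -- u = v lies on the line: contradiction
        exfalso
        rw [ha, hb, ← huv] at hab
        have hc1 : (1:ℝ) - c ≠ 0 := by
          intro h
          have hc1' : c = 1 := by linarith
          rw [hc1', one_smul] at hab
          exact hxy (sub_right_injective hab)
        have key2 : ((1:ℝ) - c) • u = x - c • y := by
          have h3 : u - x = c • u - c • y := by rw [hab, smul_sub]
          calc ((1:ℝ) - c) • u = u - c • u := by rw [sub_smul, one_smul]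
            _ = (c • u - c • y) + x - c • u := by rw [← h3]; abel
            _ = x - c • y := by abel
        have hu_eq : u = (1 - c)⁻¹ • (x - c • y) := by
          rw [← key2, inv_smul_smul₀ hc1]
        have hu_line : u ∈ lineThrough x y := by
          refine ⟨(1 - c)⁻¹, ?_⟩
          rw [hu_eq, smul_sub, smul_smul,
            show (1 - (1 - c)⁻¹) = -((1 - c)⁻¹ * c) from by field_simp; ring,
            neg_smul, ← sub_eq_add_neg]
        have : u ∈ lineThrough x y ∩ Θ j₀ := ⟨hu_line, huΘ⟩
        rw [hline₀] at this; exact this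
      · -- u ≠ v : midpoint is interior, push towards z
        have hwint : t • u + s • v ∈ interior (Θ j₀) :=
          hΘs j₀ hj₀ huΘ hvΘ huv ht hs hts
        set w := t • u + s • v with hwdef
        have hwΘ : w ∈ Θ j₀ := interior_subset hwint
        have hwne : w ≠ z := fun h => hzΘ (h ▸ hwΘ)
        obtain ⟨δ, hδ, hball⟩ := Metric.mem_nhds_iff.mp (mem_interior_iff_mem_nhds.mp hwint)
        have hzw : (0:ℝ) < ‖z - w‖ := by
          rw [norm_pos_iff, sub_ne_zero]; exact fun h => hwne h.symm
        set ε := min (δ / (2 * ‖z - w‖)) (1/2) with hε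
        have hεpos : 0 < ε := lt_min (by positivity) (by norm_num)
        have hεle : ε ≤ 1/2 := min_le_right _ _
        have hw' : w + ε • (z - w) ∈ Θ j₀ := by
          apply hball
          rw [Metric.mem_ball, dist_eq_norm]
          have : w + ε • (z - w) - w = ε • (z - w) := by abel
          rw [this, norm_smul, Real.norm_eq_abs, abs_of_pos hεpos]
          calc ε * ‖z - w‖ ≤ δ / (2 * ‖z - w‖) * ‖z - w‖ :=
                mul_le_mul_of_nonneg_right (min_le_left _ _) (norm_nonneg _)
            _ = δ / 2 := by field_simp
            _ < δ := by linarith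
        have heq2 : w + ε • (z - w) - z = (1 - ε) • (w - z) := by module
        have hgwz : 0 < gauge F (w - z) := (gauge_pos habs hvb).mpr (sub_ne_zero.mpr hwne)
        calc minTime F (Θ j₀) z ≤ gauge F (w + ε • (z - w) - z) :=
              minTime_le_gauge hFne hw' z
          _ = (1 - ε) * gauge F (w - z) := by
              rw [heq2, gauge_smul_of_nonneg (by linarith), smul_eq_mul]
          _ < gauge F (w - z) := by nlinarith
          _ = gauge F (t • a + s • b) := by rw [← hwz, hwdef]
          _ ≤ gauge F (t • a) + gauge F (s • b) := gauge_add_le hFconv habs _ _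
          _ = t * gauge F a + s * gauge F b := by
              rw [gauge_smul_of_nonneg ht.le, gauge_smul_of_nonneg hs.le, smul_eq_mul, smul_eq_mul]
          _ = _ := hRHS
    · -- non-parallel case: strict subadditivity of the gauge
      have hta : t • a ≠ 0 := smul_ne_zero ht.ne' hane
      have hsb : s • b ≠ 0 := smul_ne_zero hs.ne' hbne
      have hpar' : ¬ ∃ c : ℝ, 0 < c ∧ t • a = c • (s • b) := by
        rintro ⟨c, hc, h⟩
        apply hpar
        refine ⟨c * s / t, by positivity, ?_⟩
        have := congrArg (fun v => t⁻¹ • v) h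
        simp only [smul_smul] at this
        rw [inv_mul_cancel₀ ht.ne', one_smul] at this
        rw [this]
        congr 1
        field_simp
      calc minTime F (Θ j₀) z ≤ gauge F (t • u + s • v - z) :=
            minTime_le_gauge hFne ((hΘs j₀ hj₀).convex huΘ hvΘ ht.le hs.le hts) z
        _ = gauge F (t • a + s • b) := by rw [hwz]
        _ < gauge F (t • a) + gauge F (s • b) :=
            gauge_strict_add hFc hFb hFconv hF0 hFs hta hsb hpar'
        _ = t * gauge F a + s * gauge F b := by
            rw [gauge_smul_of_nonneg ht.le, gauge_smul_of_nonneg hs.le, smul_eq_mul, smul_eq_mul]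
        _ = _ := hRHS
  calc (∑ j ∈ J, minTime F (Θ j) z)
      < ∑ j ∈ J, (t * minTime F (Θ j) x + s * minTime F (Θ j) y) :=
        Finset.sum_lt_sum key ⟨j₀, hj₀, keyStrict⟩
    _ = t * ∑ j ∈ J, minTime F (Θ j) x + s * ∑ j ∈ J, minTime F (Θ j) y := by
        rw [Finset.sum_add_distrib, Finset.mul_sum, Finset.mul_sum]
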